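/- Let λ, μ be real numbers with λ ≥ 1 and μ > 1. Then for every z in the open unit disc 𝕌, the derivative of the normalized Wright function satisfies |𝒲'_{λ,μ}(z)| ≤ (μ+1)/(μ−1), where 𝒲'_{λ,μ}(z) = 1 + ∑_{m=1}^∞ (Γ(μ)(m+1)/(m! Γ(λm+μ))) z^m. -/

import Mathlib

set_option maxHeartbeats 1000000

open Real

private lemma gamma_ge (mu : ℝ) (hmu : 1 < mu) (m : ℕ) :
    mu ^ m * Gamma mu ≤ Gamma (mu + m) := by
  induction m with
  | zero => simp
  | succ n ih =>
    have h0 : (0:ℝ) < mu + n := by positivity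
    have h1 : Gamma (mu + (n+1)) = (mu + n) * Gamma (mu + n) := by
      rw [show (mu + (n+1) : ℝ) = (mu + n) + 1 by ring, Gamma_add_one h0.ne']
    rw [show ((((n:ℕ)+1:ℕ)):ℝ) = (n:ℝ)+1 by push_cast; ring, h1, pow_succ]
    calc mu ^ n * mu * Gamma mu = mu * (mu ^ n * Gamma mu) := by ring
    _ ≤ mu * Gamma (mu + n) := mul_le_mul_of_nonneg_left ih (by positivity)
    _ ≤ (mu + n) * Gamma (mu + n) := by
        have := Gamma_pos_of_pos h0
        nlinarith

private lemma coef_le (lam mu : ℝ) (hlam : 1 ≤ lam) (hmu : 1 < mu) (m : ℕ) :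
    Gamma mu * (m + 1) / (Nat.factorial m * Gamma (lam * m + mu)) ≤ 2 * (1/mu)^m := by
  have hGmu : 0 < Gamma mu := Gamma_pos_of_pos (by linarith)
  have hmono : Gamma (mu + m) ≤ Gamma (lam * m + mu) := by
    rcases Nat.eq_zero_or_pos m with hm | hm
    · simp [hm]
    · have h1 : (1:ℝ) ≤ m := by exact_mod_cast hm
      have hmem1 : (mu + m) ∈ Set.Ici (2:ℝ) := by
        simp only [Set.mem_Ici]; linarith
      have hmem2 : (lam * m + mu) ∈ Set.Ici (2:ℝ) := by
        simp only [Set.mem_Ici]; nlinarith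
      exact Gamma_strictMonoOn_Ici.monotoneOn hmem1 hmem2 (by nlinarith)
  have hG2 : 0 < Gamma (mu + m) := Gamma_pos_of_pos (by positivity)
  have hG3 : 0 < Gamma (lam * m + mu) := lt_of_lt_of_le hG2 hmono
  have hfact : (0:ℝ) < Nat.factorial m := by positivity
  rw [div_le_iff₀ (by positivity)]
  have hmu0 : (0:ℝ) < mu := by linarith
  have key : mu ^ m * Gamma mu ≤ Gamma (lam * m + mu) := le_trans (gamma_ge mu hmu m) hmono
  have h2fact : (m:ℝ) + 1 ≤ 2 * Nat.factorial m := by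
    induction m with
    | zero => norm_num
    | succ n ih =>
      have : (1:ℝ) ≤ Nat.factorial n := by exact_mod_cast Nat.one_le_iff_ne_zero.mpr (Nat.factorial_pos n).ne'
      rw [Nat.factorial_succ]
      push_cast
      nlinarith
  have hpow : (1/mu)^m * mu ^ m = 1 := by
    rw [← mul_pow]; field_simp; exact one_pow m
  calc Gamma mu * (m + 1) ≤ Gamma mu * (2 * Nat.factorial m) :=
        mul_le_mul_of_nonneg_left h2fact hGmu.le
  _ = 2 * (1/mu)^m * (Nat.factorial m * (mu ^ m * Gamma mu)) := by
      field_simp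
      ring_nf; rw [← mul_pow, mul_inv_cancel₀ hmu0.ne', one_pow]
  _ ≤ 2 * (1/mu)^m * (Nat.factorial m * Gamma (lam * m + mu)) := by
      apply mul_le_mul_of_nonneg_left _ (by positivity)
      exact mul_le_mul_of_nonneg_left key hfact.le



/-- The derivative of the normalized Wright function:
`𝒲'_{λ,μ}(z) = 1 + ∑_{m=1}^∞ (Γ(μ)(m+1)/(m! Γ(λm+μ))) z^m`
(the `m = 0` term is `1`). -/
noncomputable def normWrightDeriv (lam mu : ℝ) (z : ℂ) : ℂ :=
  ∑' m : ℕ,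
    ((Real.Gamma mu * (m + 1) / (Nat.factorial m * Real.Gamma (lam * m + mu)) : ℝ) : ℂ) * z ^ m

/-- If `λ ≥ 1` and `μ > 1`, then `|𝒲'_{λ,μ}(z)| ≤ (μ+1)/(μ-1)` on the open unit disc. -/
theorem abs_normWrightDeriv_le (lam mu : ℝ) (hlam : 1 ≤ lam) (hmu : 1 < mu) :
    ∀ z : ℂ, ‖z‖ < 1 → ‖normWrightDeriv lam mu z‖ ≤ (mu + 1) / (mu - 1) := by
  intro z hz
  unfold normWrightDeriv
  set f : ℕ → ℂ := fun m =>
    ((Real.Gamma mu * (m + 1) / (Nat.factorial m * Real.Gamma (lam * m + mu)) : ℝ) : ℂ) * z ^ m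
    with hf
  have hmu0 : (0:ℝ) < mu := by linarith
  have hr : (1/mu) < 1 := by rw [div_lt_one hmu0]; linarith
  have hr0 : (0:ℝ) ≤ 1/mu := by positivity
  have hcpos : ∀ m : ℕ, 0 ≤ Gamma mu * (m + 1) / (Nat.factorial m * Gamma (lam * m + mu)) := by
    intro m
    have h1 : 0 < Gamma mu := Gamma_pos_of_pos hmu0
    have h2 : 0 < Gamma (lam * m + mu) := Gamma_pos_of_pos (by positivity)
    positivity
  have hnorm : ∀ m : ℕ, ‖f m‖ ≤ 2 * (1/mu)^m := by
    intro m
    rw [hf]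
    simp only [norm_mul, Complex.norm_real, norm_pow]
    calc |Gamma mu * (m + 1) / (Nat.factorial m * Gamma (lam * m + mu))| * ‖z‖ ^ m
        ≤ (2 * (1/mu)^m) * 1 := by
          apply mul_le_mul _ _ (by positivity) (by positivity)
          · rw [abs_of_nonneg (hcpos m)]; exact coef_le lam mu hlam hmu m
          · exact pow_le_one₀ (norm_nonneg z) hz.le
    _ = 2 * (1/mu)^m := by ring
  have hsg : Summable (fun m : ℕ => 2 * (1/mu)^m) :=
    (summable_geometric_of_lt_one hr0 hr).mul_left 2
  have hs : Summable (fun m => ‖f m‖) :=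
    Summable.of_nonneg_of_le (fun m => norm_nonneg _) hnorm hsg
  refine (norm_tsum_le_tsum_norm hs).trans ?_
  rw [Summable.tsum_eq_zero_add hs]
  have hf0 : ‖f 0‖ = 1 := by
    have : Gamma mu ≠ 0 := (Gamma_pos_of_pos hmu0).ne'
    simp [hf, this]
  have htail : ∑' n : ℕ, ‖f (n + 1)‖ ≤ 2 / (mu - 1) := by
    have h1 : ∑' n : ℕ, ‖f (n + 1)‖ ≤ ∑' n : ℕ, 2 * (1/mu)^(n+1) := by
      apply Summable.tsum_le_tsum (fun n => hnorm (n+1)) (by exact (summable_nat_add_iff 1).mpr hs)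
      exact (summable_nat_add_iff 1).mpr hsg
    refine h1.trans ?_
    have h2 : ∑' n : ℕ, 2 * (1/mu)^(n+1) = 2 * (1/mu) * ∑' n : ℕ, (1/mu)^n := by
      rw [← tsum_mul_left]
      congr 1; ext n; ring
    rw [h2, tsum_geometric_of_lt_one hr0 hr]
    have hne : mu - 1 ≠ 0 := by linarith
    have heq : 2 * (1/mu) * (1 - 1/mu)⁻¹ = 2 / (mu - 1) := by
      rw [show (1 - 1/mu) = (mu-1)/mu by field_simp]
      field_simp
    exact le_of_eq heq
  rw [hf0]
  have : (mu + 1) / (mu - 1) = 1 + 2 / (mu - 1) := by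
    have hne : mu - 1 ≠ 0 := by linarith
    field_simp
    ring
  rw [this]
  linarith
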